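/- Fix k ∈ ℕ and define I_k(m,n) for m, n ≥ 0 by the generating function ∑_{n≥0} I_k(m,n) q^n = (∏_{j≥1}(1-q^j))^{-1} · ∑_{n≥1} (-1)^{n-1} q^{n((2k-1)n-1)/2 + mn}, and N_k(m,n) = I_k(|m|,n) - I_k(|m|+1,n). Then for all integers m with |m| > n/2, N_k(m,n) = p(n - (k-1+|m|)) - p(n - (k+|m|)), where p is the partition function (with p(x) = 0 for x < 0). -/

import Mathlib

open scoped BigOperators

/-- Partition function `p`, extended by `0` to negative integers. -/
noncomputable def partFun (n : ℤ) : ℤ :=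
  if 0 ≤ n then (Fintype.card (Nat.Partition n.toNat) : ℤ) else 0

/-- `I_k(m,n)`: the coefficient of `qⁿ` in
`(∏_{j≥1}(1-q^j))^{-1} ∑_{ℓ≥1}(-1)^{ℓ-1} q^{ℓ((2k-1)ℓ-1)/2+mℓ}`,
written out via `∑ p(n)qⁿ = ∏(1-q^j)^{-1}`. -/
noncomputable def Ik (k m n : ℕ) : ℤ :=
  ∑ ℓ ∈ Finset.Icc 1 (n + 1), (-1 : ℤ) ^ (ℓ - 1) *
    partFun ((n : ℤ) - ((2 * (k : ℤ) - 1) * (ℓ : ℤ) ^ 2 - (ℓ : ℤ)) / 2 - (m : ℤ) * (ℓ : ℤ))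

/-- `N_k(m,n) = I_k(|m|,n) - I_k(|m|+1,n)`. -/
noncomputable def Nk (k : ℕ) (m : ℤ) (n : ℕ) : ℤ :=
  Ik k m.natAbs n - Ik k (m.natAbs + 1) n

lemma partFun_neg {x : ℤ} (h : x < 0) : partFun x = 0 := by
  simp [partFun, not_le.mpr h]

lemma Ik_large (k : ℕ) (hk : 1 ≤ k) (n M : ℕ) (h : (n : ℤ) < 2 * M) :
    Ik k M n = partFun ((n : ℤ) - ((k : ℤ) - 1) - M) := by
  unfold Ik
  rw [Finset.sum_eq_single 1]
  · norm_num
    congr 1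
    omega
  · intro ℓ hℓ hne
    rw [Finset.mem_Icc] at hℓ
    have hL : (2 : ℤ) ≤ (ℓ : ℤ) := by exact_mod_cast (by omega : 2 ≤ ℓ)
    set L : ℤ := (ℓ : ℤ) with hLdef
    have hX : 0 ≤ (2 * (k : ℤ) - 1) * L ^ 2 - L := by nlinarith [sq_nonneg L]
    have hY : 2 * (M : ℤ) ≤ (M : ℤ) * L := by nlinarith [Int.ofNat_nonneg M]
    have harg : (n : ℤ) - ((2 * (k : ℤ) - 1) * L ^ 2 - L) / 2 - (M : ℤ) * L < 0 := by
      set X := (2 * (k : ℤ) - 1) * L ^ 2 - L with hXdef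
      set Y := (M : ℤ) * L with hYdef
      omega
    rw [partFun_neg harg, mul_zero]
  · intro hnot
    exact absurd (Finset.mem_Icc.mpr ⟨le_refl 1, by omega⟩) hnot

/-- For `|m| > n/2`, `N_k(m,n) = p(n-(k-1+|m|)) - p(n-(k+|m|))`. -/
theorem Nk_of_large_abs (k : ℕ) (hk : 1 ≤ k) (n : ℕ) (m : ℤ)
    (hm : (n : ℤ) < 2 * |m|) :
    Nk k m n = partFun ((n : ℤ) - ((k : ℤ) - 1 + |m|))
      - partFun ((n : ℤ) - ((k : ℤ) + |m|)) := by
  have hM : |m| = (m.natAbs : ℤ) := Int.abs_eq_natAbs m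
  rw [hM] at hm ⊢
  unfold Nk
  rw [Ik_large k hk n m.natAbs hm, Ik_large k hk n (m.natAbs + 1) (by push_cast; omega)]
  push_cast
  ring_nf
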